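/- Let b be C¹, odd, with b'(0) < 0, and let σ > 0. If λ > −b'(0)/σ², then the density P(x) = N·cosh(√(2λ)x)·e^{2B(x)/σ²} has a strict local minimum at x = 0 (P''(0) > 0), whereas the density P₀(x) = N₀·e^{2B(x)/σ²} has a strict local maximum at x = 0 (P₀''(0) < 0). -/

import Mathlib

open Real MeasureTheory intervalIntegral

private lemma aux_min (f g : ℝ → ℝ) (K : ℝ) (hK : 0 < K) (hf0 : f 0 = 0)
    (hd : HasDerivAt f K 0) (hg : ∀ x, HasDerivAt g (f x) x) : IsLocalMin g 0 := by
  have hslope : Filter.Tendsto (slope f 0) (nhdsWithin 0 {0}ᶜ) (nhds K) :=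
    hasDerivAt_iff_tendsto_slope.mp hd
  have hev : ∀ᶠ x in nhdsWithin 0 {0}ᶜ, 0 < slope f 0 x :=
    hslope.eventually (eventually_gt_nhds hK)
  have hderiv : deriv g = f := funext fun x => (hg x).deriv
  apply isLocalMin_of_deriv' (hg 0).continuousAt
  · exact ((nhdsLT_le_nhdsNE (0:ℝ)) (Filter.Eventually.of_forall
      fun x => (hg x).differentiableAt))
  · exact ((nhdsGT_le_nhdsNE (0:ℝ)) (Filter.Eventually.of_forall
      fun x => (hg x).differentiableAt))
  · have h1 : ∀ᶠ x in nhdsWithin 0 (Set.Iio 0), 0 < slope f 0 x :=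
      (nhdsLT_le_nhdsNE (0:ℝ)) hev
    filter_upwards [h1, self_mem_nhdsWithin] with x hx hx'
    rw [hderiv]
    have hx0 : x < 0 := hx'
    rw [slope_def_field, hf0, sub_zero, sub_zero] at hx
    rcases div_pos_iff.mp hx with ⟨_, h⟩ | ⟨h, _⟩ <;> linarith
  · have h1 : ∀ᶠ x in nhdsWithin 0 (Set.Ioi 0), 0 < slope f 0 x :=
      (nhdsGT_le_nhdsNE (0:ℝ)) hev
    filter_upwards [h1, self_mem_nhdsWithin] with x hx hx'
    rw [hderiv]
    have hx0 : (0:ℝ) < x := hx'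
    rw [slope_def_field, hf0, sub_zero, sub_zero] at hx
    rcases div_pos_iff.mp hx with ⟨h, _⟩ | ⟨_, h⟩ <;> linarith

private lemma aux_max (f g : ℝ → ℝ) (K : ℝ) (hK : K < 0) (hf0 : f 0 = 0)
    (hd : HasDerivAt f K 0) (hg : ∀ x, HasDerivAt g (f x) x) : IsLocalMax g 0 := by
  have h := aux_min (fun x => -f x) (fun x => -g x) (-K) (by linarith) (by simp [hf0])
    hd.neg (fun x => (hg x).neg)
  have := h.neg
  simpa using this

theorem dmps_changes_modality (b : ℝ → ℝ) (hb : ContDiff ℝ 1 b)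
    (hodd : ∀ x, b (-x) = -b x) (hb0 : deriv b 0 < 0)
    (σ l N N₀ : ℝ) (hσ : 0 < σ) (hN : 0 < N) (hN₀ : 0 < N₀)
    (hl : -deriv b 0 / σ ^ 2 < l)
    (B : ℝ → ℝ) (hB : B = fun x => ∫ ξ in (0:ℝ)..x, b ξ)
    (P P₀ : ℝ → ℝ)
    (hP : P = fun x => N * Real.cosh (Real.sqrt (2 * l) * x) * exp (2 * B x / σ ^ 2))
    (hP₀ : P₀ = fun x => N₀ * exp (2 * B x / σ ^ 2)) :
    (0 < deriv (deriv P) 0 ∧ IsLocalMin P 0) ∧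
    (deriv (deriv P₀) 0 < 0 ∧ IsLocalMax P₀ 0) := by
  set c := Real.sqrt (2 * l) with hc
  have hσ2 : (0:ℝ) < σ ^ 2 := by positivity
  have hb00 : b 0 = 0 := by have := hodd 0; rw [neg_zero] at this; linarith
  have hbc : Continuous b := hb.continuous
  have hBd : ∀ x, HasDerivAt B (b x) x := by
    intro x
    rw [hB]
    exact intervalIntegral.integral_hasDerivAt_right (hbc.intervalIntegrable _ _)
      (hbc.aestronglyMeasurable.stronglyMeasurableAtFilter) hbc.continuousAt
  have hB0 : B 0 = 0 := by rw [hB]; simp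
  have hbd : HasDerivAt b (deriv b 0) 0 := ((hb.differentiable one_ne_zero) 0).hasDerivAt
  have hl0 : 0 < l := lt_trans (div_pos (by linarith) hσ2) hl
  have hc2 : c * c = 2 * l := Real.mul_self_sqrt (by linarith)
  -- E and its derivative
  have hEd : ∀ x, HasDerivAt (fun y => exp (2 * B y / σ ^ 2))
      (exp (2 * B x / σ ^ 2) * (2 * b x / σ ^ 2)) x := by
    intro x
    have h1 : HasDerivAt (fun y => 2 * B y / σ ^ 2) (2 * b x / σ ^ 2) x :=
      ((hBd x).const_mul 2).div_const (σ ^ 2)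
    exact h1.exp
  -- derivative of P
  set P' : ℝ → ℝ := fun x => N * (Real.sinh (c * x) * c) * exp (2 * B x / σ ^ 2)
      + N * Real.cosh (c * x) * (exp (2 * B x / σ ^ 2) * (2 * b x / σ ^ 2)) with hP'def
  have hCd : ∀ x, HasDerivAt (fun y => Real.cosh (c * y)) (Real.sinh (c * x) * c) x := by
    intro x
    have h := HasDerivAt.cosh ((hasDerivAt_id x).const_mul c)
    simpa using h
  have hSd : ∀ x, HasDerivAt (fun y => Real.sinh (c * y)) (Real.cosh (c * x) * c) x := by
    intro x
    have h := HasDerivAt.sinh ((hasDerivAt_id x).const_mul c)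
    simpa using h
  have hPd : ∀ x, HasDerivAt P (P' x) x := by
    intro x
    rw [hP]
    exact ((hCd x).const_mul N).mul (hEd x)
  have hderivP : deriv P = P' := funext fun x => (hPd x).deriv
  -- second derivative of P at 0
  set K : ℝ := N * (c * c + 2 * deriv b 0 / σ ^ 2) with hKdef
  have hP'0 : P' 0 = 0 := by simp [hP'def, hb00]
  have hKd : HasDerivAt P' K 0 := by
    have h1 := (((hSd 0).mul_const c).const_mul N).mul (hEd 0)
    have h2 : HasDerivAt (fun x => exp (2 * B x / σ ^ 2) * (2 * b x / σ ^ 2))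
        (exp (2 * B 0 / σ ^ 2) * (2 * b 0 / σ ^ 2) * (2 * b 0 / σ ^ 2)
          + exp (2 * B 0 / σ ^ 2) * (2 * deriv b 0 / σ ^ 2)) 0 :=
      (hEd 0).mul ((hbd.const_mul 2).div_const (σ ^ 2))
    have h3 := h1.add (((hCd 0).const_mul N).mul h2)
    rw [hP'def]
    refine h3.congr_deriv ?_
    rw [hKdef]
    simp [hb00, hB0]
    ring
  have hKpos : 0 < K := by
    have h1 : -deriv b 0 < l * σ ^ 2 := by rwa [div_lt_iff₀ hσ2] at hl
    have h2 : 0 < l + deriv b 0 / σ ^ 2 := by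
      have : 0 < l * σ ^ 2 + deriv b 0 := by linarith
      have := div_pos this hσ2
      rw [add_div, mul_div_assoc, div_self (ne_of_gt hσ2), mul_one] at this
      linarith
    rw [hKdef, hc2]
    have : 0 < 2 * l + 2 * deriv b 0 / σ ^ 2 := by
      have : 2 * deriv b 0 / σ ^ 2 = 2 * (deriv b 0 / σ ^ 2) := by ring
      rw [this]; linarith
    positivity
  have hPP : deriv (deriv P) 0 = K := by rw [hderivP]; exact hKd.deriv
  -- P₀
  set Q : ℝ → ℝ := fun x => N₀ * (exp (2 * B x / σ ^ 2) * (2 * b x / σ ^ 2)) with hQdef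
  have hQd : ∀ x, HasDerivAt P₀ (Q x) x := by
    intro x
    rw [hP₀]
    exact (hEd x).const_mul N₀
  have hderivP₀ : deriv P₀ = Q := funext fun x => (hQd x).deriv
  set K₀ : ℝ := N₀ * (2 * deriv b 0 / σ ^ 2) with hK₀def
  have hQ0 : Q 0 = 0 := by simp [hQdef, hb00]
  have hK₀d : HasDerivAt Q K₀ 0 := by
    have h2 : HasDerivAt (fun x => exp (2 * B x / σ ^ 2) * (2 * b x / σ ^ 2))
        (exp (2 * B 0 / σ ^ 2) * (2 * b 0 / σ ^ 2) * (2 * b 0 / σ ^ 2)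
          + exp (2 * B 0 / σ ^ 2) * (2 * deriv b 0 / σ ^ 2)) 0 :=
      (hEd 0).mul ((hbd.const_mul 2).div_const (σ ^ 2))
    have h3 := h2.const_mul N₀
    rw [hQdef]
    refine h3.congr_deriv ?_
    rw [hK₀def]
    simp [hb00, hB0]
  have hK₀neg : K₀ < 0 := by
    rw [hK₀def]
    have : 2 * deriv b 0 / σ ^ 2 < 0 := div_neg_of_neg_of_pos (by linarith) hσ2
    exact mul_neg_of_pos_of_neg hN₀ this
  have hPP₀ : deriv (deriv P₀) 0 = K₀ := by rw [hderivP₀]; exact hK₀d.deriv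
  refine ⟨⟨by rw [hPP]; exact hKpos, ?_⟩, ⟨by rw [hPP₀]; exact hK₀neg, ?_⟩⟩
  · exact aux_min P' P K hKpos hP'0 hKd hPd
  · exact aux_max Q P₀ K₀ hK₀neg hQ0 hK₀d hQd
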